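/- The special case k = 1 of the previous structural lemma: if f = A·∏_{i=1}^{s}(z−a_i)^{m_i}/∏_{j=1}^{t}(z−b_j)^{l_j} with m_i ≥ 1, l_j ≥ 1 and all a_i, b_j distinct, then f' = A·∏_i(z−a_i)^{m_i−1}·g(z)/∏_j(z−b_j)^{l_j+1}, where g is a polynomial with deg(g) ≤ s+t−1 and leading coefficient of z^{s+t−1} equal to M−N, where M = Σ m_i, N = Σ l_j. -/

import Mathlib

open Polynomial
open Finset

lemma polyderiv_finset_prod {ι : Type*} [DecidableEq ι] (s : Finset ι) (f : ι → ℂ[X]) :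
    derivative (∏ i ∈ s, f i) = ∑ i ∈ s, (∏ j ∈ s.erase i, f j) * derivative (f i) := by
  classical
  induction s using Finset.induction with
  | empty => simp
  | @insert i s hi ih =>
    rw [Finset.prod_insert hi, derivative_mul, Finset.sum_insert hi, ih, Finset.mul_sum]
    rw [Finset.erase_insert hi]
    congr 1
    · ring
    · apply Finset.sum_congr rfl
      intro j hj
      have hji : i ≠ j := fun h => hi (h ▸ hj)
      rw [Finset.erase_insert_of_ne hji, Finset.prod_insert
        (fun h => hi (Finset.mem_of_mem_erase h))]
      ring

lemma aux_deriv (n : ℕ) (c : Fin n → ℂ) (e : Fin n → ℕ) (he : ∀ i, 1 ≤ e i) :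
    derivative (∏ i, (X - C (c i)) ^ (e i)) =
      (∏ i, (X - C (c i)) ^ (e i - 1)) *
        ∑ i, C ((e i : ℂ)) * ∏ k ∈ Finset.univ.erase i, (X - C (c k)) := by
  rw [polyderiv_finset_prod, Finset.mul_sum]
  apply Finset.sum_congr rfl
  intro i _
  rw [derivative_X_sub_C_pow]
  have h1 : ∀ k : Fin n, (X - C (c k)) ^ (e k) =
      (X - C (c k)) ^ (e k - 1) * (X - C (c k)) := by
    intro k
    conv_lhs => rw [← Nat.sub_add_cancel (he k)]
    rw [pow_succ]
  calc (∏ j ∈ Finset.univ.erase i, (X - C (c j)) ^ (e j)) * (C ((e i : ℂ)) * (X - C (c i)) ^ (e i - 1))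
      = ((∏ j ∈ Finset.univ.erase i, (X - C (c j)) ^ (e j - 1)) *
          ∏ j ∈ Finset.univ.erase i, (X - C (c j))) * (C ((e i : ℂ)) * (X - C (c i)) ^ (e i - 1)) := by
        rw [← Finset.prod_mul_distrib]
        congr 1
        exact Finset.prod_congr rfl fun k _ => h1 k
    _ = ((X - C (c i)) ^ (e i - 1) * ∏ j ∈ Finset.univ.erase i, (X - C (c j)) ^ (e j - 1)) *
          (C ((e i : ℂ)) * ∏ k ∈ Finset.univ.erase i, (X - C (c k))) := by ring
    _ = (∏ j, (X - C (c j)) ^ (e j - 1)) * (C ((e i : ℂ)) * ∏ k ∈ Finset.univ.erase i, (X - C (c k))) := by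
        rw [Finset.mul_prod_erase Finset.univ (fun j => (X - C (c j)) ^ (e j - 1)) (Finset.mem_univ i)]

lemma aux_S (n : ℕ) (c : Fin n → ℂ) (e : Fin n → ℕ) :
    natDegree (∑ i, C ((e i : ℂ)) * ∏ k ∈ Finset.univ.erase i, (X - C (c k))) ≤ n - 1 ∧
    coeff (∑ i, C ((e i : ℂ)) * ∏ k ∈ Finset.univ.erase i, (X - C (c k))) (n - 1)
      = ∑ i, (e i : ℂ) := by
  have hcard : ∀ i : Fin n, (Finset.univ.erase i).card = n - 1 := by
    intro i
    rw [Finset.card_erase_of_mem (Finset.mem_univ i), Finset.card_univ, Fintype.card_fin]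
  have hmon : ∀ i : Fin n, (∏ k ∈ Finset.univ.erase i, (X - C (c k))).Monic :=
    fun i => monic_prod_of_monic _ _ fun k _ => monic_X_sub_C (c k)
  have hdeg : ∀ i : Fin n, (∏ k ∈ Finset.univ.erase i, (X - C (c k))).natDegree = n - 1 := by
    intro i
    rw [natDegree_prod _ _ (fun k _ => X_sub_C_ne_zero (c k))]
    simp [natDegree_X_sub_C, hcard i]
  constructor
  · apply natDegree_sum_le_of_forall_le
    intro i _
    exact (natDegree_C_mul_le _ _).trans (le_of_eq (hdeg i))
  · rw [finset_sum_coeff]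
    apply Finset.sum_congr rfl
    intro i _
    rw [coeff_C_mul, ← hdeg i, (hmon i).coeff_natDegree, mul_one]


theorem stmt6 (s t : ℕ) (hs : 1 ≤ s) (ht : 1 ≤ t)
    (A : ℂ) (hA : A ≠ 0) (a : Fin s → ℂ) (b : Fin t → ℂ)
    (ha : Function.Injective a) (hb : Function.Injective b)
    (hab : ∀ i j, a i ≠ b j)
    (m : Fin s → ℕ) (hm : ∀ i, 1 ≤ m i) (l : Fin t → ℕ) (hl : ∀ j, 1 ≤ l j)
    (f : ℂ → ℂ)
    (hf : ∀ z : ℂ, f z = A * (∏ i, (z - a i) ^ (m i)) / ∏ j, (z - b j) ^ (l j))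
    (M N : ℕ) (hM : M = ∑ i, m i) (hN : N = ∑ j, l j) :
    ∃ g : ℂ[X], g.natDegree ≤ s + t - 1 ∧
      g.coeff (s + t - 1) = (M : ℂ) - (N : ℂ) ∧
      ∀ z : ℂ, (∀ j, z ≠ b j) →
        deriv f z
          = A * (∏ i, (z - a i) ^ (m i - 1)) * g.eval z / ∏ j, (z - b j) ^ (l j + 1) := by
  classical
  set Pa1 : ℂ[X] := ∏ i, (X - C (a i)) ^ (m i - 1) with hPa1
  set Sa : ℂ[X] := ∑ i, C ((m i : ℂ)) * ∏ k ∈ Finset.univ.erase i, (X - C (a k)) with hSa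
  set PaL : ℂ[X] := ∏ i, (X - C (a i)) with hPaL
  set Qb1 : ℂ[X] := ∏ j, (X - C (b j)) ^ (l j - 1) with hQb1
  set Sb : ℂ[X] := ∑ j, C ((l j : ℂ)) * ∏ k ∈ Finset.univ.erase j, (X - C (b k)) with hSb
  set QbL : ℂ[X] := ∏ j, (X - C (b j)) with hQbL
  set P : ℂ[X] := ∏ i, (X - C (a i)) ^ (m i) with hP
  set Q : ℂ[X] := ∏ j, (X - C (b j)) ^ (l j) with hQ
  obtain ⟨hSadeg, hSacoeff⟩ := aux_S s a m
  obtain ⟨hSbdeg, hSbcoeff⟩ := aux_S t b l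
  rw [← hSa] at hSadeg hSacoeff
  rw [← hSb] at hSbdeg hSbcoeff
  have hQbLmon : QbL.Monic := monic_prod_of_monic _ _ fun j _ => monic_X_sub_C (b j)
  have hPaLmon : PaL.Monic := monic_prod_of_monic _ _ fun i _ => monic_X_sub_C (a i)
  have hQbLdeg : QbL.natDegree = t := by
    rw [hQbL, natDegree_prod _ _ (fun j _ => X_sub_C_ne_zero (b j))]
    simp [natDegree_X_sub_C]
  have hPaLdeg : PaL.natDegree = s := by
    rw [hPaL, natDegree_prod _ _ (fun i _ => X_sub_C_ne_zero (a i))]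
    simp [natDegree_X_sub_C]
  refine ⟨Sa * QbL - PaL * Sb, ?_, ?_, ?_⟩
  · apply le_trans (natDegree_sub_le _ _)
    apply max_le
    · calc (Sa * QbL).natDegree ≤ Sa.natDegree + QbL.natDegree := natDegree_mul_le
        _ ≤ (s - 1) + t := add_le_add hSadeg (le_of_eq hQbLdeg)
        _ = s + t - 1 := by omega
    · calc (PaL * Sb).natDegree ≤ PaL.natDegree + Sb.natDegree := natDegree_mul_le
        _ ≤ s + (t - 1) := add_le_add (le_of_eq hPaLdeg) hSbdeg
        _ = s + t - 1 := by omega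
  · rw [coeff_sub]
    have h1 : (Sa * QbL).coeff (s + t - 1) = (M : ℂ) := by
      have he : s + t - 1 = (s - 1) + t := by omega
      rw [he, coeff_mul_add_eq_of_natDegree_le hSadeg (le_of_eq hQbLdeg), hSacoeff,
        ← hQbLdeg, hQbLmon.coeff_natDegree, mul_one, hM, Nat.cast_sum]
    have h2 : (PaL * Sb).coeff (s + t - 1) = (N : ℂ) := by
      have he : s + t - 1 = s + (t - 1) := by omega
      rw [he, coeff_mul_add_eq_of_natDegree_le (le_of_eq hPaLdeg) hSbdeg, hSbcoeff,
        ← hPaLdeg, hPaLmon.coeff_natDegree, one_mul, hN, Nat.cast_sum]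
    rw [h1, h2]
  · intro z hz
    have hfe : f = fun w => A * eval w P / eval w Q := by
      funext w
      rw [hf w]
      simp [hP, hQ, eval_prod]
    have hQz : eval z Q ≠ 0 := by
      simp only [hQ, eval_prod, eval_pow, eval_sub, eval_X, eval_C]
      exact Finset.prod_ne_zero_iff.mpr fun j _ => pow_ne_zero _ (sub_ne_zero.mpr (hz j))
    have hQb1z : eval z Qb1 ≠ 0 := by
      simp only [hQb1, eval_prod, eval_pow, eval_sub, eval_X, eval_C]
      exact Finset.prod_ne_zero_iff.mpr fun j _ => pow_ne_zero _ (sub_ne_zero.mpr (hz j))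
    have hQbLz : eval z QbL ≠ 0 := by
      simp only [hQbL, eval_prod, eval_sub, eval_X, eval_C]
      exact Finset.prod_ne_zero_iff.mpr fun j _ => sub_ne_zero.mpr (hz j)
    have hP' : derivative P = Pa1 * Sa := by
      rw [hP, hPa1, hSa]; exact aux_deriv s a m hm
    have hQ' : derivative Q = Qb1 * Sb := by
      rw [hQ, hQb1, hSb]; exact aux_deriv t b l hl
    have hPfac : P = Pa1 * PaL := by
      rw [hP, hPa1, hPaL, ← Finset.prod_mul_distrib]
      exact Finset.prod_congr rfl fun i _ => by rw [← pow_succ, Nat.sub_add_cancel (hm i)]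
    have hQfac : Q = Qb1 * QbL := by
      rw [hQ, hQb1, hQbL, ← Finset.prod_mul_distrib]
      exact Finset.prod_congr rfl fun j _ => by rw [← pow_succ, Nat.sub_add_cancel (hl j)]
    have hkey : derivative P * Q - P * derivative Q = Pa1 * Qb1 * (Sa * QbL - PaL * Sb) := by
      rw [hP', hQ']
      nth_rewrite 1 [hQfac]
      nth_rewrite 1 [hPfac]
      ring
    have hder : HasDerivAt (fun w => A * eval w P / eval w Q)
        ((A * eval z (derivative P) * eval z Q - A * eval z P * eval z (derivative Q))
          / (eval z Q) ^ 2) z :=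
      ((P.hasDerivAt z).const_mul A).div (Q.hasDerivAt z) hQz
    rw [hfe, hder.deriv]
    have e1 : ∏ i, (z - a i) ^ (m i - 1) = eval z Pa1 := by simp [hPa1, eval_prod]
    have e2 : ∏ j, (z - b j) ^ (l j + 1) = eval z Qb1 * (eval z QbL) ^ 2 := by
      rw [hQb1, hQbL]
      simp only [eval_prod, eval_pow, eval_sub, eval_X, eval_C, ← Finset.prod_pow]
      rw [← Finset.prod_mul_distrib]
      exact Finset.prod_congr rfl fun j _ => by rw [← pow_add]; congr 1; have := hl j; omega
    have e4 : A * eval z (derivative P) * eval z Q - A * eval z P * eval z (derivative Q)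
        = A * (eval z Pa1 * eval z Qb1 * eval z (Sa * QbL - PaL * Sb)) := by
      have h := congrArg (eval z) hkey
      simp only [eval_sub, eval_mul] at h
      calc A * eval z (derivative P) * eval z Q - A * eval z P * eval z (derivative Q)
          = A * (eval z (derivative P) * eval z Q - eval z P * eval z (derivative Q)) := by ring
        _ = A * (eval z Pa1 * eval z Qb1 * eval z (Sa * QbL - PaL * Sb)) := by
            rw [h]; simp [eval_sub, eval_mul]
    have e3 : eval z Q = eval z Qb1 * eval z QbL := by rw [hQfac, eval_mul]
    rw [e4, e1, e2, e3]
    field_simp
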